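/- Under the deterministic training sequence where the chips in each ambient symbol block sum to zero, the correlator output of the composite received signal a·s(t)c(t) + b·s(t) (desired plus direct-link ambient) against c(t) equals a·(1/N_s)Σ_i s_i; i.e., the ambient contribution b·s(t) is completely eliminated. -/

import Mathlib

open MeasureTheory Finset Set

theorem stmt_7 (T_s T_c : ℝ) (hTs : 0 < T_s) (hTc : 0 < T_c)
    (N_s N_c : ℕ) (hNs : 0 < N_s) (hNc : 0 < N_c) (hdvd : N_s ∣ N_c)
    (hrel : (N_c : ℝ) * T_c = (N_s : ℝ) * T_s)
    (sv : ℕ → ℂ) (cv : ℕ → ℤ) (hcv : ∀ n < N_c, cv n = 1 ∨ cv n = -1)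
    (hzero : ∀ i < N_s,
      ∑ n ∈ Finset.Ico ((N_c / N_s) * i) ((N_c / N_s) * (i + 1)), cv n = 0)
    (a b : ℂ) :
    (1 / ((N_c : ℂ) * (T_c : ℂ))) * ∫ t in (0:ℝ)..((N_c : ℝ) * T_c),
        (a * sv (⌊t / T_s⌋.toNat) * ((cv (⌊t / T_c⌋.toNat) : ℂ))
          + b * sv (⌊t / T_s⌋.toNat)) * ((cv (⌊t / T_c⌋.toNat) : ℂ))
      = a * ((1 / (N_s : ℂ)) * ∑ i ∈ Finset.range N_s, sv i) := by
  obtain ⟨m, hm⟩ := hdvd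
  have hm0 : 0 < m := by
    rcases Nat.eq_zero_or_pos m with h | h
    · rw [h, mul_zero] at hm; omega
    · exact h
  have hmdef : N_c / N_s = m := by rw [hm, Nat.mul_div_cancel_left m hNs]
  have hTs_eq : T_s = m * T_c := by
    have hNs' : (N_s : ℝ) ≠ 0 := by positivity
    have : (N_s : ℝ) * ((m : ℝ) * T_c) = (N_s : ℝ) * T_s := by
      rw [← hrel, hm]; push_cast; ring
    exact (mul_left_cancel₀ hNs' this).symm
  set f : ℝ → ℂ := fun t =>
    (a * sv (⌊t / T_s⌋.toNat) * ((cv (⌊t / T_c⌋.toNat) : ℂ))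
      + b * sv (⌊t / T_s⌋.toNat)) * ((cv (⌊t / T_c⌋.toNat) : ℂ)) with hf
  set C : ℕ → ℂ := fun n => (a * sv (n / m) * (cv n : ℂ) + b * sv (n / m)) * (cv n : ℂ) with hC
  -- value of f on each chip interval
  have key : ∀ n : ℕ, ∀ t ∈ Set.Ico ((n : ℝ) * T_c) (((n : ℝ) + 1) * T_c),
      f t = C n := by
    intro n t ht
    obtain ⟨h1, h2⟩ := ht
    have hfc : ⌊t / T_c⌋ = (n : ℤ) := by
      rw [Int.floor_eq_iff]
      constructor
      · push_cast
        rw [le_div_iff₀ hTc]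
        exact h1
      · push_cast
        rw [div_lt_iff₀ hTc]
        exact h2
    have hfs : ⌊t / T_s⌋ = ((n / m : ℕ) : ℤ) := by
      rw [Int.floor_eq_iff]
      have hmT : (0:ℝ) < (m : ℝ) * T_c := by positivity
      constructor
      · push_cast
        rw [hTs_eq, le_div_iff₀ hmT]
        calc ((n / m : ℕ) : ℝ) * ((m:ℝ) * T_c) = ((m * (n / m) : ℕ) : ℝ) * T_c := by
              push_cast; ring
          _ ≤ (n : ℝ) * T_c := by
              apply mul_le_mul_of_nonneg_right _ hTc.le
              exact_mod_cast Nat.mul_div_le n m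
          _ ≤ t := h1
      · push_cast
        rw [hTs_eq, div_lt_iff₀ hmT]
        have hlt : n + 1 ≤ m * (n / m + 1) := by
          have h1' := Nat.div_add_mod n m
          have h2' := Nat.mod_lt n hm0
          have e1 : m * (n / m + 1) = m * (n / m) + m := by ring
          omega
        calc t < ((n : ℝ) + 1) * T_c := h2
          _ ≤ ((m * (n / m + 1) : ℕ) : ℝ) * T_c := by
              apply mul_le_mul_of_nonneg_right _ hTc.le
              exact_mod_cast hlt
          _ = (((n / m : ℕ) : ℝ) + 1) * ((m:ℝ) * T_c) := by push_cast; ring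
    simp only [hf, hC, hfc, hfs, Int.toNat_natCast]
  have hCineq : ∀ n : ℕ, (n : ℝ) * T_c < ((n : ℝ) + 1) * T_c := by
    intro n; nlinarith
  have haen : ∀ n : ℕ, ∀ᵐ t : ℝ, t ∈ Set.uIoc ((n : ℝ) * T_c) (((n : ℝ) + 1) * T_c) →
      f t = C n := by
    intro n
    have hne : ∀ᵐ t : ℝ, t ≠ ((n : ℝ) + 1) * T_c := by
      rw [MeasureTheory.ae_iff]
      have : {t : ℝ | ¬ t ≠ ((n : ℝ) + 1) * T_c} = {((n : ℝ) + 1) * T_c} := by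
        ext x; simp
      rw [this]; exact Real.volume_singleton
    filter_upwards [hne] with t ht htI
    rw [Set.uIoc_of_le (hCineq n).le] at htI
    exact key n t ⟨htI.1.le, lt_of_le_of_ne htI.2 ht⟩
  -- integral over each chip
  have piece : ∀ n : ℕ, (∫ t in ((n : ℝ) * T_c)..(((n : ℝ) + 1) * T_c), f t)
      = (T_c : ℂ) * C n := by
    intro n
    rw [intervalIntegral.integral_congr_ae (haen n), intervalIntegral.integral_const]
    have : ((n : ℝ) + 1) * T_c - (n : ℝ) * T_c = T_c := by ring
    rw [this, Complex.real_smul]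
  have hInt : ∀ k < N_c, IntervalIntegrable f volume
      ((fun k : ℕ => (k : ℝ) * T_c) k) ((fun k : ℕ => (k : ℝ) * T_c) (k + 1)) := by
    intro k _
    have hres : (fun _ : ℝ => C k)
        =ᵐ[volume.restrict (Set.uIoc ((k : ℝ) * T_c) (((k : ℝ) + 1) * T_c))] f := by
      have h' := (ae_restrict_iff' measurableSet_uIoc).mpr (haen k)
      filter_upwards [h'] with t ht
      exact ht.symm
    have : IntervalIntegrable f volume ((k : ℝ) * T_c) (((k : ℝ) + 1) * T_c) :=
      (intervalIntegrable_const (c := C k)).congr_ae hres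
    simpa [Nat.cast_add, Nat.cast_one] using this
  have hsum := intervalIntegral.sum_integral_adjacent_intervals
    (a := fun k : ℕ => (k : ℝ) * T_c) (μ := volume) (f := f) (n := N_c) hInt
  simp only [Nat.cast_zero, zero_mul] at hsum
  rw [show (∫ t in (0:ℝ)..((N_c : ℝ) * T_c),
        (a * sv (⌊t / T_s⌋.toNat) * ((cv (⌊t / T_c⌋.toNat) : ℂ))
          + b * sv (⌊t / T_s⌋.toNat)) * ((cv (⌊t / T_c⌋.toNat) : ℂ)))
      = ∫ t in (0:ℝ)..((N_c : ℝ) * T_c), f t from rfl, ← hsum]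
  have hpieces : ∀ k ∈ Finset.range N_c,
      (∫ x in ((k : ℝ) * T_c)..((((k : ℕ) + 1 : ℕ) : ℝ) * T_c), f x)
        = (T_c : ℂ) * (a * sv (k / m) + b * (sv (k / m) * (cv k : ℂ))) := by
    intro k hk
    have hcast : (((k : ℕ) + 1 : ℕ) : ℝ) * T_c = ((k : ℝ) + 1) * T_c := by push_cast; ring
    rw [hcast, piece k]
    have hsq : (cv k : ℂ) * (cv k : ℂ) = 1 := by
      rcases hcv k (Finset.mem_range.mp hk) with h | h <;> rw [h] <;> norm_num
    simp only [hC]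
    linear_combination ((T_c : ℂ) * a * sv (k / m)) * hsq
  rw [Finset.sum_congr rfl hpieces]
  -- block decomposition
  have block : ∀ (g : ℕ → ℂ) (k : ℕ), ∑ n ∈ Finset.range (m * k), g n
      = ∑ i ∈ Finset.range k, ∑ n ∈ Finset.Ico (m * i) (m * (i + 1)), g n := by
    intro g k
    induction k with
    | zero => simp
    | succ k ih =>
      rw [Finset.sum_range_succ, ← ih, Finset.range_eq_Ico, Finset.range_eq_Ico]
      exact (Finset.sum_Ico_consecutive g (Nat.zero_le (m * k))
          (Nat.mul_le_mul_left m (Nat.le_succ k))).symm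
  have hrange : Finset.range N_c = Finset.range (m * N_s) := by rw [hm, Nat.mul_comm]
  rw [hrange, block]
  have hblocks : ∀ i ∈ Finset.range N_s,
      (∑ n ∈ Finset.Ico (m * i) (m * (i + 1)),
        (T_c : ℂ) * (a * sv (n / m) + b * (sv (n / m) * (cv n : ℂ))))
      = (T_c : ℂ) * (m : ℂ) * (a * sv i) := by
    intro i hi
    have hdiv : ∀ n ∈ Finset.Ico (m * i) (m * (i + 1)), n / m = i := by
      intro n hn
      rw [Finset.mem_Ico] at hn
      exact Nat.div_eq_of_lt_le (by rw [Nat.mul_comm]; exact hn.1)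
        (by rw [Nat.mul_comm]; exact hn.2)
    rw [Finset.sum_congr rfl (fun n hn => by rw [hdiv n hn])]
    rw [Finset.sum_congr rfl (fun n _ => by
      show (T_c : ℂ) * (a * sv i + b * (sv i * (cv n : ℂ)))
        = (T_c : ℂ) * (a * sv i) + (T_c : ℂ) * b * sv i * (cv n : ℂ)
      ring)]
    rw [Finset.sum_add_distrib, Finset.sum_const, ← Finset.mul_sum]
    have hz : (∑ n ∈ Finset.Ico (m * i) (m * (i + 1)), (cv n : ℂ)) = 0 := by
      have := hzero i (Finset.mem_range.mp hi)
      rw [hmdef] at this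
      push_cast [← this]
      norm_cast
    rw [hz, mul_zero, add_zero, Nat.card_Ico]
    have : m * (i + 1) - m * i = m := by
      have e1 : m * (i + 1) = m * i + m := by ring
      omega
    rw [this, nsmul_eq_mul]
    ring
  rw [Finset.sum_congr rfl hblocks, ← Finset.mul_sum, ← Finset.mul_sum]
  have hNc' : (N_c : ℂ) = (N_s : ℂ) * (m : ℂ) := by rw [hm]; push_cast; ring
  rw [hNc']
  have h1 : (N_s : ℂ) ≠ 0 := Nat.cast_ne_zero.mpr hNs.ne'
  have h2 : (m : ℂ) ≠ 0 := Nat.cast_ne_zero.mpr hm0.ne'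
  have h3 : (T_c : ℂ) ≠ 0 := by
    simp only [ne_eq, Complex.ofReal_eq_zero]; exact hTc.ne'
  field_simp
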